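/- Let M = ⊕_{i=1}^r I_i e_i ⊊ S^r be a squarefree stable submodule (all f_i = 0) generated in degrees d_1 < d_2 < ... < d_t, and set m_{d_j} = max{m(u) : u e_i ∈ G(M)_{d_j}}. If m_{d_1} - d_1 > m_{d_2} - d_2 > ... > m_{d_t} - d_t, then for each i = 1,...,t, β_{m_{d_i} - d_i, m_{d_i}}(M) is an extremal Betti number of M, so M has at least t extremal Betti numbers. -/
import Mathlib


open scoped Classical

noncomputable section

/-- The squarefree monomial `∏_{i ∈ A} x_i` of `S = K[x_1,…,x_n]`,
encoded by its support `A ⊆ {1,…,n}`. -/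
def sqMon (K : Type*) [Field K] {n : ℕ} (A : Finset (Fin n)) : MvPolynomial (Fin n) K :=
  ∏ i ∈ A, MvPolynomial.X i

/-- `[x_1,…,x_n]^d`: the ideal generated by all squarefree monomials of degree `d`. -/
def sqPow (K : Type*) [Field K] (n d : ℕ) : Ideal (MvPolynomial (Fin n) K) :=
  Ideal.span {p | ∃ A : Finset (Fin n), A.card = d ∧ p = sqMon K A}

/-- `I` is a squarefree monomial ideal: generated by squarefree monomials. -/
def IsSqMonIdeal (K : Type*) [Field K] {n : ℕ} (I : Ideal (MvPolynomial (Fin n) K)) : Prop :=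
  ∃ G : Set (Finset (Fin n)), I = Ideal.span (sqMon K '' G)

/-- `A` encodes a minimal monomial generator of the squarefree monomial ideal `I`. -/
def IsMinGen (K : Type*) [Field K] {n : ℕ} (I : Ideal (MvPolynomial (Fin n) K))
    (A : Finset (Fin n)) : Prop :=
  sqMon K A ∈ I ∧ ∀ B : Finset (Fin n), B ⊂ A → sqMon K B ∉ I

/-- `m(u)` : the largest index (1-based) occurring in the squarefree monomial with support `A`. -/
def mIdx {n : ℕ} (A : Finset (Fin n)) : ℕ := A.sup (fun i => i.1 + 1)

/-- Squarefree stable ideal: for every minimal generator `u`,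
`x_j u / x_{m(u)} ∈ I` for all `j < m(u)`, `j ∉ supp u`. -/
def IsSqStableIdeal (K : Type*) [Field K] {n : ℕ} (I : Ideal (MvPolynomial (Fin n) K)) : Prop :=
  IsSqMonIdeal K I ∧ ∀ A : Finset (Fin n), IsMinGen K I A →
    ∀ (hA : A.Nonempty) (j : Fin n), j ∉ A → j < A.max' hA →
      sqMon K (insert j (A.erase (A.max' hA))) ∈ I

/-- Squarefree strongly stable ideal: for every minimal generator `u`,
`x_j u / x_i ∈ I` for all `i ∈ supp u` and `j < i`, `j ∉ supp u`. -/
def IsSqStronglyStableIdeal (K : Type*) [Field K] {n : ℕ}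
    (I : Ideal (MvPolynomial (Fin n) K)) : Prop :=
  IsSqMonIdeal K I ∧ ∀ A : Finset (Fin n), IsMinGen K I A →
    ∀ i ∈ A, ∀ j : Fin n, j ∉ A → j < i → sqMon K (insert j (A.erase i)) ∈ I

/-- The squarefree lexicographic order (on supports of equal-degree squarefree monomials):
`A >_slex B` iff at the first index where they differ, `A` has the smaller index. -/
def slexGT {n : ℕ} (A B : Finset (Fin n)) : Prop :=
  ∃ h : (symmDiff A B).Nonempty, (symmDiff A B).min' h ∈ A

/-- Squarefree lexsegment ideal. -/
def IsSqLexIdeal (K : Type*) [Field K] {n : ℕ} (I : Ideal (MvPolynomial (Fin n) K)) : Prop :=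
  IsSqMonIdeal K I ∧ ∀ A B : Finset (Fin n), A.card = B.card →
    sqMon K A ∈ I → slexGT B A → sqMon K B ∈ I

/-- `indeg I`: the least degree of a (squarefree) monomial in `I`. -/
def indeg (K : Type*) [Field K] {n : ℕ} (I : Ideal (MvPolynomial (Fin n) K)) : ℕ :=
  sInf {d : ℕ | ∃ A : Finset (Fin n), A.card = d ∧ sqMon K A ∈ I}

/-- `G(I)_d`: the minimal generators of `I` in degree `d`, as a finset of supports. -/
def mgens (K : Type*) [Field K] {n : ℕ} (I : Ideal (MvPolynomial (Fin n) K)) (d : ℕ) :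
    Finset (Finset (Fin n)) :=
  Finset.univ.filter (fun A => IsMinGen K I A ∧ A.card = d)

/-- Graded Betti numbers `β_{k,k+j}(M)` of `M = ⊕ I_i e_i` (deg `e_i = f i`),
via the Aramova–Herzog–Hibi formula. -/
def betti (K : Type*) [Field K] {n r : ℕ} (I : Fin r → Ideal (MvPolynomial (Fin n) K))
    (f : Fin r → ℕ) (k j : ℕ) : ℕ :=
  ∑ i : Fin r, ∑ A ∈ mgens K (I i) (j - f i), Nat.choose (mIdx A - A.card) k

/-- Graded Betti numbers `β_{k,k+j}(I)` of a squarefree stable ideal (AHH formula). -/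
def bettiI (K : Type*) [Field K] {n : ℕ} (I : Ideal (MvPolynomial (Fin n) K)) (k j : ℕ) : ℕ :=
  ∑ A ∈ mgens K I j, Nat.choose (mIdx A - A.card) k

/-- `β k ℓ` (standing for `β_{k,k+ℓ}`) is an extremal Betti number. -/
def IsExtremal (β : ℕ → ℕ → ℕ) (k ℓ : ℕ) : Prop :=
  β k ℓ ≠ 0 ∧ ∀ i j : ℕ, k ≤ i → ℓ ≤ j → (i, j) ≠ (k, ℓ) → β i j = 0

/-- Squarefree stable submodule `M = ⊕ I_i e_i ⊊ F` (characterization):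
each `I_i` a proper squarefree stable ideal, and
`[x_1,…,x_n]^{f_{i+1}-f_i} I_{i+1} ⊆ I_i`. -/
def IsSqStableSubmodule (K : Type*) [Field K] {n r : ℕ}
    (I : Fin r → Ideal (MvPolynomial (Fin n) K)) (f : Fin r → ℕ) : Prop :=
  (∀ i, I i ≠ ⊤ ∧ IsSqStableIdeal K (I i)) ∧
  ∀ i : Fin r, ∀ h : i.1 + 1 < r,
    sqPow K n (f ⟨i.1 + 1, h⟩ - f i) * I ⟨i.1 + 1, h⟩ ≤ I i

/-- Squarefree lexicographic submodule (characterization of Proposition `lex`):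
each `I_i` a proper squarefree lexsegment ideal, and
`[x_1,…,x_n]^{indeg I_{i+1} + f_{i+1} - f_i} ⊆ I_i`. -/
def IsSqLexSubmodule (K : Type*) [Field K] {n r : ℕ}
    (I : Fin r → Ideal (MvPolynomial (Fin n) K)) (f : Fin r → ℕ) : Prop :=
  (∀ i, IsSqLexIdeal K (I i) ∧ I i ≠ ⊤) ∧
  ∀ i : Fin r, ∀ h : i.1 + 1 < r,
    sqPow K n (indeg K (I ⟨i.1 + 1, h⟩) + f ⟨i.1 + 1, h⟩ - f i) ≤ I i

end

lemma card_le_mIdx {n : ℕ} (A : Finset (Fin n)) : A.card ≤ mIdx A := by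
  have h : A.image Fin.val ⊆ Finset.range (mIdx A) := by
    intro x hx
    simp only [Finset.mem_image] at hx
    obtain ⟨i, hi, rfl⟩ := hx
    exact Finset.mem_range.2 (Nat.lt_of_lt_of_le (Nat.lt_succ_self _) (Finset.le_sup (f := fun i : Fin n => i.1 + 1) hi))
  calc A.card = (A.image Fin.val).card :=
        (Finset.card_image_of_injective _ Fin.val_injective).symm
    _ ≤ (Finset.range (mIdx A)).card := Finset.card_le_card h
    _ = mIdx A := Finset.card_range _

/-- for `M ⊊ S^r` squarefree stable generated in degrees `d_1 < ⋯ < d_t`,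
with `m_{d_j} = max{m(u) : u e_i ∈ G(M)_{d_j}}`, if
`m_{d_1}-d_1 > ⋯ > m_{d_t}-d_t`, then each `β_{m_{d_j}-d_j, m_{d_j}}(M)` is extremal. -/
theorem stmt_13 (K : Type*) [Field K] (n r t : ℕ)
    (I : Fin r → Ideal (MvPolynomial (Fin n) K))
    (hM : IsSqStableSubmodule K I (fun _ => 0))
    (d : Fin t → ℕ) (hd : StrictMono d)
    (hgen : ∀ (i : Fin r) (A : Finset (Fin n)), IsMinGen K (I i) A → ∃ j, A.card = d j)
    (m : Fin t → ℕ)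
    (hm : ∀ j : Fin t, IsGreatest {v : ℕ | ∃ (i : Fin r) (A : Finset (Fin n)),
      IsMinGen K (I i) A ∧ A.card = d j ∧ v = mIdx A} (m j))
    (hdec : ∀ j j' : Fin t, j < j' → m j' - d j' < m j - d j) :
    ∀ j : Fin t, IsExtremal (betti K I (fun _ => 0)) (m j - d j) (d j) := by
  intro j
  obtain ⟨⟨i₀, A₀, hgen₀, hcard₀, hmIdx₀⟩, hub⟩ := hm j
  constructor
  · -- nonvanishing
    have hmem : A₀ ∈ mgens K (I i₀) (d j - (fun _ : Fin r => (0 : ℕ)) i₀) := by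
      unfold mgens
      rw [Finset.mem_filter]
      exact ⟨Finset.mem_univ _, hgen₀, by simpa using hcard₀⟩
    have h1 : Nat.choose (mIdx A₀ - A₀.card) (m j - d j)
        ≤ betti K I (fun _ => 0) (m j - d j) (d j) := by
      refine le_trans ?_ (Finset.single_le_sum
        (f := fun p => ∑ A ∈ mgens K (I p) (d j - (fun _ : Fin r => (0 : ℕ)) p),
          Nat.choose (mIdx A - A.card) (m j - d j))
        (fun _ _ => Nat.zero_le _) (Finset.mem_univ i₀))
      exact Finset.single_le_sum
        (f := fun A => Nat.choose (mIdx A - A.card) (m j - d j))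
        (fun _ _ => Nat.zero_le _) hmem
    have heq : mIdx A₀ - A₀.card = m j - d j := by rw [← hmIdx₀, hcard₀]
    rw [heq, Nat.choose_self] at h1
    exact Nat.one_le_iff_ne_zero.mp h1
  · intro i ℓ hki hℓ hne
    unfold betti
    refine Finset.sum_eq_zero fun p _ => Finset.sum_eq_zero fun A hA => ?_
    unfold mgens at hA
    rw [Finset.mem_filter] at hA
    obtain ⟨-, hminA, hcardA⟩ := hA
    rw [Nat.sub_zero] at hcardA
    obtain ⟨j', hj'⟩ := hgen p A hminA
    have hub' : mIdx A ≤ m j' := (hm j').2 ⟨p, A, hminA, hj', rfl⟩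
    apply Nat.choose_eq_zero_of_lt
    have hd' : d j ≤ d j' := by rw [← hj', hcardA]; exact hℓ
    rcases eq_or_lt_of_le hd' with heq | hlt
    · have hjj : j' = j := hd.injective heq.symm
      subst hjj
      have hℓeq : ℓ = d j' := by rw [← hj', hcardA]
      have hi : m j' - d j' < i := by
        rcases lt_or_eq_of_le hki with h | h
        · exact h
        · exact absurd (by rw [← h, hℓeq]) hne
      calc mIdx A - A.card ≤ m j' - A.card := Nat.sub_le_sub_right hub' _
        _ = m j' - d j' := by rw [hj']
        _ < i := hi
    · have hjj' : j < j' := hd.lt_iff_lt.1 hlt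
      calc mIdx A - A.card ≤ m j' - A.card := Nat.sub_le_sub_right hub' _
        _ = m j' - d j' := by rw [hj']
        _ < m j - d j := hdec j j' hjj'
        _ ≤ i := hki
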